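/- Let G = (V,E) be a finite connected D-regular graph with second-largest adjacency eigenvalue λ. Then for every A ⊆ V with |A| ≤ |V|/2, the edge boundary satisfies |∂A| ≥ ((D-λ)/2)·|A|. -/

import Mathlib

open scoped Classical

/-- Edge boundary of a vertex set. -/
noncomputable def edgeBdry {V : Type*} [Fintype V] [DecidableEq V]
    (G : SimpleGraph V) (A : Finset V) : Finset (Sym2 V) :=
  G.edgeFinset.filter (fun f => ∃ x ∈ A, ∃ y, y ∉ A ∧ f = s(x, y))

lemma edgeBdry_card_eq {V : Type*} [Fintype V] [DecidableEq V]
    (G : SimpleGraph V) (A : Finset V) :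
    ((edgeBdry G A).card : ℝ) = ∑ u ∈ A, ∑ v ∈ Aᶜ, (G.adjMatrix ℝ) u v := by
  have h1 : ∑ u ∈ A, ∑ v ∈ Aᶜ, (G.adjMatrix ℝ) u v
      = ((A ×ˢ Aᶜ).filter (fun p => G.Adj p.1 p.2)).card := by
    rw [← Finset.sum_product' (f := fun u v => (G.adjMatrix ℝ) u v)]
    simp only [SimpleGraph.adjMatrix_apply]
    rw [Finset.sum_boole]
  rw [h1]
  norm_cast
  symm
  apply Finset.card_bij (fun p _ => s(p.1, p.2))
  · intro p hp
    simp only [Finset.mem_filter, Finset.mem_product, Finset.mem_compl] at hp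
    simp only [edgeBdry, Finset.mem_filter, SimpleGraph.mem_edgeFinset,
      SimpleGraph.mem_edgeSet]
    exact ⟨hp.2, p.1, hp.1.1, p.2, hp.1.2, rfl⟩
  · intro p hp q hq he
    simp only [Finset.mem_filter, Finset.mem_product, Finset.mem_compl] at hp hq
    rw [Sym2.eq_iff] at he
    rcases he with ⟨h1, h2⟩ | ⟨h1, h2⟩
    · exact Prod.ext h1 h2
    · exact absurd (h1 ▸ hp.1.1) hq.1.2
  · intro e he
    simp only [edgeBdry, Finset.mem_filter, SimpleGraph.mem_edgeFinset,
      SimpleGraph.mem_edgeSet] at he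
    obtain ⟨hadj, x, hx, y, hy, rfl⟩ := he
    refine ⟨(x, y), ?_, rfl⟩
    simp only [Finset.mem_filter, Finset.mem_product, Finset.mem_compl]
    refine ⟨⟨hx, hy⟩, ?_⟩
    simpa [SimpleGraph.mem_edgeSet] using hadj

lemma row_sum_eq {V : Type*} [Fintype V] [DecidableEq V] (G : SimpleGraph V) (D : ℕ)
    (hreg : G.IsRegularOfDegree D) (u : V) :
    ∑ v, (G.adjMatrix ℝ) u v = D := by
  simp [SimpleGraph.adjMatrix, Finset.sum_boole]
  rw [← SimpleGraph.neighborFinset_eq_filter]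
  exact_mod_cast hreg u

lemma indicator_sum_eq {V : Type*} [Fintype V] [DecidableEq V] (A : Finset V)
    (g : V → ℝ) :
    ∑ u, (if u ∈ A then (1:ℝ) else 0) * g u = ∑ u ∈ A, g u := by
  simp only [ite_mul, one_mul, zero_mul]
  rw [Finset.sum_ite_mem, Finset.univ_inter]

theorem cheeger_edge_expansion {V : Type*} [Fintype V] [DecidableEq V]
    (G : SimpleGraph V) (hconn : G.Connected)
    (D : ℕ) (hreg : G.IsRegularOfDegree D) (lam : ℝ)
    (hlam : ∀ x : V → ℝ, (∑ v, x v) = 0 →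
      (∑ u, ∑ v, (G.adjMatrix ℝ) u v * x u * x v) ≤ lam * (∑ v, (x v) ^ 2)) :
    ∀ A : Finset V, 2 * A.card ≤ Fintype.card V →
      ((D : ℝ) - lam) / 2 * A.card ≤ ((edgeBdry G A).card : ℝ) := by
  intro A hA
  have hVpos : 0 < Fintype.card V := Fintype.card_pos_iff.mpr hconn.nonempty
  set n : ℝ := (Fintype.card V : ℝ) with hn
  have hnpos : (0:ℝ) < n := by rw [hn]; exact_mod_cast hVpos
  set a : ℝ := (A.card : ℝ) with ha
  have hanonneg : (0:ℝ) ≤ a := by positivity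
  have h2a : 2 * a ≤ n := by rw [ha, hn]; exact_mod_cast hA
  set B : ℝ := ((edgeBdry G A).card : ℝ) with hBdef
  have hBnonneg : (0:ℝ) ≤ B := by positivity
  rcases le_or_gt ((D:ℝ)) lam with hD | hD
  · have : ((D:ℝ) - lam) / 2 * a ≤ 0 := by nlinarith
    linarith
  set c : ℝ := a / n with hc
  have hnc : n * c = a := by rw [hc]; field_simp [hnpos.ne']
  have hc2 : 2 * c ≤ 1 := by nlinarith [hnc, h2a, hnpos]
  set x : V → ℝ := fun v => (if v ∈ A then (1:ℝ) else 0) - c with hxdef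
  have hfsum : ∑ v : V, (if v ∈ A then (1:ℝ) else 0) = a := by
    rw [Finset.sum_boole]
    simp [ha]
  have hxsum : ∑ v, x v = 0 := by
    have h : ∑ v, x v = a - n * c := by
      simp only [hxdef, Finset.sum_sub_distrib, hfsum, Finset.sum_const,
        Finset.card_univ, nsmul_eq_mul, ← hn]
    rw [h, hnc, sub_self]
  have key := hlam x hxsum
  -- row and column sums
  have hrow : ∀ u : V, ∑ v, (G.adjMatrix ℝ) u v = D := row_sum_eq G D hreg
  have hcol : ∀ v : V, ∑ u, (G.adjMatrix ℝ) u v = D := by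
    intro v
    rw [← hrow v]
    apply Finset.sum_congr rfl
    intro u _
    simp [SimpleGraph.adjMatrix_apply, SimpleGraph.adj_comm]
  -- sum of squares
  have hx2 : ∑ v, (x v) ^ 2 = a - 2 * c * a + n * c ^ 2 := by
    have hsq : ∀ v : V, (x v) ^ 2
        = (if v ∈ A then (1:ℝ) else 0) - 2 * c * (if v ∈ A then (1:ℝ) else 0) + c ^ 2 := by
      intro v
      simp only [hxdef]
      split <;> ring
    rw [Finset.sum_congr rfl (fun v _ => hsq v)]
    rw [Finset.sum_add_distrib, Finset.sum_sub_distrib, hfsum, ← Finset.mul_sum, hfsum]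
    simp only [Finset.sum_const, Finset.card_univ, nsmul_eq_mul]
    rfl
  -- quadratic form
  have hterm : ∀ u v : V, (G.adjMatrix ℝ) u v * x u * x v
      = (if u ∈ A then (1:ℝ) else 0) * ((if v ∈ A then (1:ℝ) else 0) * (G.adjMatrix ℝ) u v)
        - c * ((if u ∈ A then (1:ℝ) else 0) * (G.adjMatrix ℝ) u v)
        - c * ((if v ∈ A then (1:ℝ) else 0) * (G.adjMatrix ℝ) u v)
        + c ^ 2 * (G.adjMatrix ℝ) u v := by
    intro u v
    simp only [hxdef]
    ring
  have hQ : ∑ u, ∑ v, (G.adjMatrix ℝ) u v * x u * x v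
      = (a * D - B) - c * (a * D) - c * (a * D) + c ^ 2 * (n * D) := by
    have hS2 : ∑ u, ∑ v, (if u ∈ A then (1:ℝ) else 0)
        * ((if v ∈ A then (1:ℝ) else 0) * (G.adjMatrix ℝ) u v)
        = a * D - B := by
      have e1 : ∀ u : V, ∑ v, (if u ∈ A then (1:ℝ) else 0)
          * ((if v ∈ A then (1:ℝ) else 0) * (G.adjMatrix ℝ) u v)
          = (if u ∈ A then (1:ℝ) else 0) * ∑ v ∈ A, (G.adjMatrix ℝ) u v := by
        intro u
        rw [← Finset.mul_sum, indicator_sum_eq]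
      rw [Finset.sum_congr rfl (fun u _ => e1 u), indicator_sum_eq]
      have e2 : ∀ u ∈ A, ∑ v ∈ A, (G.adjMatrix ℝ) u v
          = (D : ℝ) - ∑ v ∈ Aᶜ, (G.adjMatrix ℝ) u v := by
        intro u _
        have := Finset.sum_add_sum_compl A (fun v => (G.adjMatrix ℝ) u v)
        rw [hrow u] at this
        linarith
      rw [Finset.sum_congr rfl e2, Finset.sum_sub_distrib, Finset.sum_const,
        nsmul_eq_mul, ← edgeBdry_card_eq, ← ha, ← hBdef]
    have hS1 : ∑ u, ∑ v, (if u ∈ A then (1:ℝ) else 0) * (G.adjMatrix ℝ) u v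
        = a * D := by
      have e1 : ∀ u : V, ∑ v, (if u ∈ A then (1:ℝ) else 0) * (G.adjMatrix ℝ) u v
          = (if u ∈ A then (1:ℝ) else 0) * D := by
        intro u
        rw [← Finset.mul_sum, hrow u]
      rw [Finset.sum_congr rfl (fun u _ => e1 u), indicator_sum_eq,
        Finset.sum_const, nsmul_eq_mul, ← ha]
    have hS1' : ∑ u, ∑ v, (if v ∈ A then (1:ℝ) else 0) * (G.adjMatrix ℝ) u v
        = a * D := by
      rw [Finset.sum_comm]
      have e1 : ∀ v : V, ∑ u, (if v ∈ A then (1:ℝ) else 0) * (G.adjMatrix ℝ) u v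
          = (if v ∈ A then (1:ℝ) else 0) * D := by
        intro v
        rw [← Finset.mul_sum, hcol v]
      rw [Finset.sum_congr rfl (fun v _ => e1 v), indicator_sum_eq,
        Finset.sum_const, nsmul_eq_mul, ← ha]
    have hS0 : ∑ u : V, ∑ v : V, (G.adjMatrix ℝ) u v = n * D := by
      rw [Finset.sum_congr rfl (fun u _ => hrow u), Finset.sum_const,
        Finset.card_univ, nsmul_eq_mul, ← hn]
    calc ∑ u, ∑ v, (G.adjMatrix ℝ) u v * x u * x v
        = ∑ u, ∑ v, ((if u ∈ A then (1:ℝ) else 0)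
            * ((if v ∈ A then (1:ℝ) else 0) * (G.adjMatrix ℝ) u v)
          - c * ((if u ∈ A then (1:ℝ) else 0) * (G.adjMatrix ℝ) u v)
          - c * ((if v ∈ A then (1:ℝ) else 0) * (G.adjMatrix ℝ) u v)
          + c ^ 2 * (G.adjMatrix ℝ) u v) := by
          exact Finset.sum_congr rfl fun u _ => Finset.sum_congr rfl fun v _ => hterm u v
      _ = (a * D - B) - c * (a * D) - c * (a * D) + c ^ 2 * (n * D) := by
          have hT2 : ∑ u : V, ∑ v : V,
              c * ((if u ∈ A then (1:ℝ) else 0) * (G.adjMatrix ℝ) u v) = c * (a * D) := by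
            rw [← hS1, Finset.mul_sum]
            exact Finset.sum_congr rfl fun u _ => by rw [Finset.mul_sum]
          have hT3 : ∑ u : V, ∑ v : V,
              c * ((if v ∈ A then (1:ℝ) else 0) * (G.adjMatrix ℝ) u v) = c * (a * D) := by
            rw [← hS1', Finset.mul_sum]
            exact Finset.sum_congr rfl fun u _ => by rw [Finset.mul_sum]
          have hT4 : ∑ u : V, ∑ v : V,
              c ^ 2 * (G.adjMatrix ℝ) u v = c ^ 2 * (n * D) := by
            rw [← hS0, Finset.mul_sum]
            exact Finset.sum_congr rfl fun u _ => by rw [Finset.mul_sum]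
          simp only [Finset.sum_add_distrib, Finset.sum_sub_distrib]
          rw [hS2, hT2, hT3, hT4]
  rw [hQ, hx2] at key
  have hnc2 : n * c ^ 2 = a * c := by rw [sq, ← mul_assoc, hnc]
  have haux : (0:ℝ) ≤ ((D:ℝ) - lam) * a * (1 / 2 - c) := by
    apply mul_nonneg (mul_nonneg (by linarith) hanonneg)
    linarith
  nlinarith [key, hnc, hnc2, haux]
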